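/- In the setting of the multivariate inclusion–exclusion formula (q families of events, counts C_i, quantities S_k), for every r ∈ ℕ^q and every odd m ≥ 0: P(C = r) ≥ ∑ (-1)^{(k_1-r_1)+⋯+(k_q-r_q)} C(k_1,r_1)⋯C(k_q,r_q) S_k, where the sum runs over all k with r_i ≤ k_i ≤ |I_i| for all i and (k_1-r_1)+⋯+(k_q-r_q) ≤ m; for even m, the reverse inequality (≤) holds. -/

import Mathlib

open MeasureTheory Finset
open scoped Classical



-- Lemma A: alternating partial sums of binomial coefficients
lemma bonf_alt_sum (N m : ℕ) (hN : 1 ≤ N) :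
    ∑ s ∈ range (m + 1), (-1 : ℝ) ^ s * (N.choose s : ℝ) = (-1) ^ m * ((N - 1).choose m : ℝ) := by
  obtain ⟨N, rfl⟩ : ∃ N', N = N' + 1 := ⟨N - 1, by omega⟩
  induction m with
  | zero => simp
  | succ m ih =>
    rw [Finset.sum_range_succ, ih]
    have h : (N + 1).choose (m + 1) = N.choose m + N.choose (m + 1) := Nat.choose_succ_succ _ _
    simp only [Nat.add_sub_cancel] at *
    rw [h]
    push_cast
    ring

lemma bonf_sum_piFinset_cons {q : ℕ} (f : Fin (q + 1) → Finset ℕ) {M : Type*} [AddCommMonoid M]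
    (g : (Fin (q + 1) → ℕ) → M) :
    ∑ d ∈ Fintype.piFinset f, g d =
      ∑ x ∈ f 0, ∑ d ∈ Fintype.piFinset (fun i => f i.succ), g (Fin.cons x d) := by
  rw [← Finset.sum_product']
  refine Finset.sum_nbij' (fun d => (d 0, Fin.tail d)) (fun p => Fin.cons p.1 p.2) ?_ ?_ ?_ ?_ ?_
  · intro a ha
    simp only [Fintype.mem_piFinset] at ha
    simp [Finset.mem_product, Fintype.mem_piFinset, Fin.tail, ha]
  · rintro ⟨x, d⟩ hp
    simp only [Finset.mem_product, Fintype.mem_piFinset] at hp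
    simp only [Fintype.mem_piFinset]
    intro i
    refine Fin.cases ?_ ?_ i
    · simpa using hp.1
    · intro j; simpa using hp.2 j
  · intro a _; exact Fin.cons_self_tail a
  · rintro ⟨x, d⟩ _; simp [Fin.tail_cons]
  · intro a _; rw [Fin.cons_self_tail]

-- multivariate Vandermonde
lemma bonf_vand : ∀ (q : ℕ) (n : Fin q → ℕ) (s : ℕ),
    ∑ d ∈ (Fintype.piFinset fun i => range (n i + 1)).filter (fun d => ∑ i, d i = s),
        ∏ i, (n i).choose (d i) = (∑ i, n i).choose s := by
  intro q
  induction q with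
  | zero =>
    intro n s
    rw [Fintype.piFinset_of_isEmpty, Finset.sum_filter, Finset.univ_unique, Finset.sum_singleton]
    simp only [Finset.univ_eq_empty, Finset.sum_empty, Finset.prod_empty]
    cases s with
    | zero => simp
    | succ s => simp
  | succ q ih =>
    intro n s
    rw [Finset.sum_filter, bonf_sum_piFinset_cons]
    have key : ∀ x : ℕ,
        (∑ d ∈ Fintype.piFinset (fun j => range (n j.succ + 1)),
          if (∑ i, Fin.cons x d i) = s then ∏ i, (n i).choose (Fin.cons (α := fun _ => ℕ) x d i)
            else 0) =
        if x ≤ s then (n 0).choose x * (∑ j : Fin q, n j.succ).choose (s - x) else 0 := by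
      intro x
      by_cases hx : x ≤ s
      · rw [if_pos hx, ← ih (fun j => n j.succ) (s - x), Finset.sum_filter, Finset.mul_sum]
        refine Finset.sum_congr rfl fun d _ => ?_
        rw [Fin.sum_univ_succ, Fin.prod_univ_succ]
        simp only [Fin.cons_zero, Fin.cons_succ, mul_ite, mul_zero]
        refine if_congr ?_ rfl rfl
        omega
      · rw [if_neg hx]
        refine Finset.sum_eq_zero fun d _ => ?_
        rw [Fin.sum_univ_succ]
        simp only [Fin.cons_zero, Fin.cons_succ]
        rw [if_neg (by omega)]
    simp only [key]
    rw [Fin.sum_univ_succ, Nat.add_choose_eq, Finset.Nat.sum_antidiagonal_eq_sum_range_succ_mk]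
    have h1 : ∑ x ∈ range (n 0 + 1), (if x ≤ s then (n 0).choose x * (∑ j : Fin q, n j.succ).choose (s - x) else 0)
        = ∑ x ∈ range (n 0 + s + 1), (if x ≤ s then (n 0).choose x * (∑ j : Fin q, n j.succ).choose (s - x) else 0) := by
      refine Finset.sum_subset (by intro x hx; simp at *; omega) fun x _ hx => ?_
      simp only [Finset.mem_range, not_lt] at hx
      rw [Nat.choose_eq_zero_of_lt (by omega)]
      simp
    have h2 : ∑ x ∈ range (s + 1), (n 0).choose x * (∑ j : Fin q, n j.succ).choose (s - x)
        = ∑ x ∈ range (n 0 + s + 1), (if x ≤ s then (n 0).choose x * (∑ j : Fin q, n j.succ).choose (s - x) else 0) := by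
      have h3 : ∑ x ∈ range (s + 1),
            (if x ≤ s then (n 0).choose x * (∑ j : Fin q, n j.succ).choose (s - x) else 0)
          = ∑ x ∈ range (n 0 + s + 1),
            (if x ≤ s then (n 0).choose x * (∑ j : Fin q, n j.succ).choose (s - x) else 0) :=
        Finset.sum_subset (Finset.range_subset_range.2 (by omega))
          (fun x _ hx => if_neg (by simp only [Finset.mem_range, not_lt] at hx; omega))
      rw [← h3]
      refine Finset.sum_congr rfl fun x hx => ?_
      rw [if_pos (by simp only [Finset.mem_range] at hx; omega)]
    rw [h1, h2]

lemma bonf_choose_mul (c k r : ℕ) (hrc : r ≤ c) (hrk : r ≤ k) :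
    c.choose k * k.choose r = c.choose r * (c - r).choose (k - r) := by
  by_cases hkc : k ≤ c
  · exact Nat.choose_mul hrk
  · rw [Nat.choose_eq_zero_of_lt (show c < k by omega), zero_mul,
      Nat.choose_eq_zero_of_lt (show c - r < k - r by omega), mul_zero]

-- the pointwise combinatorial core
lemma bonf_core (q : ℕ) (B r c : Fin q → ℕ) (hc : ∀ i, c i ≤ B i) (m : ℕ) :
    (Odd m →
      (∑ k ∈ (Fintype.piFinset fun i => Finset.Icc (r i) (B i)).filter
          (fun k => ∑ i, (k i - r i) ≤ m),
        (-1 : ℝ) ^ (∑ i, (k i - r i)) * (∏ i, ((k i).choose (r i) : ℝ)) *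
          (∏ i, ((c i).choose (k i) : ℝ)))
      ≤ (if c = r then (1 : ℝ) else 0))
    ∧ (Even m →
      (if c = r then (1 : ℝ) else 0) ≤
      ∑ k ∈ (Fintype.piFinset fun i => Finset.Icc (r i) (B i)).filter
          (fun k => ∑ i, (k i - r i) ≤ m),
        (-1 : ℝ) ^ (∑ i, (k i - r i)) * (∏ i, ((k i).choose (r i) : ℝ)) *
          (∏ i, ((c i).choose (k i) : ℝ))) := by
  by_cases h1 : ∀ i, r i ≤ c i
  · by_cases h2 : c = r
    · -- sum equals 1
      subst h2
      have hT : (∑ k ∈ (Fintype.piFinset fun i => Finset.Icc (c i) (B i)).filter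
          (fun k => ∑ i, (k i - c i) ≤ m),
        (-1 : ℝ) ^ (∑ i, (k i - c i)) * (∏ i, ((k i).choose (c i) : ℝ)) *
          (∏ i, ((c i).choose (k i) : ℝ))) = 1 := by
        rw [Finset.sum_eq_single c]
        · simp
        · intro k hk hkc
          simp only [Finset.mem_filter, Fintype.mem_piFinset, Finset.mem_Icc] at hk
          obtain ⟨i, hi⟩ : ∃ i, c i < k i := by
            by_contra h
            push_neg at h
            exact hkc (funext fun i => le_antisymm (h i) ((hk.1 i).1))
          have : ((c i).choose (k i) : ℝ) = 0 := by
            rw [Nat.choose_eq_zero_of_lt hi]; norm_num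
          have hp : (∏ i, ((c i).choose (k i) : ℝ)) = 0 :=
            Finset.prod_eq_zero (Finset.mem_univ i) this
          rw [hp, mul_zero]
        · intro hcm
          exfalso
          apply hcm
          simp only [Finset.mem_filter, Fintype.mem_piFinset, Finset.mem_Icc]
          exact ⟨fun i => ⟨le_refl _, hc i⟩, by simp⟩
      rw [hT, if_pos rfl]
      exact ⟨fun _ => le_refl 1, fun _ => le_refl 1⟩
    · -- main case: r ≤ c pointwise, c ≠ r
      have hN : 1 ≤ ∑ i, (c i - r i) := by
        obtain ⟨i, hi⟩ : ∃ i, r i < c i := by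
          by_contra h; push_neg at h
          exact h2 (funext fun i => le_antisymm (h i) (h1 i))
        calc 1 ≤ c i - r i := by omega
          _ ≤ ∑ i, (c i - r i) :=
            Finset.single_le_sum (f := fun i => c i - r i) (fun _ _ => Nat.zero_le _)
              (Finset.mem_univ i)
      have hrB : ∀ i, r i ≤ B i := fun i => le_trans (h1 i) (hc i)
      have key : (∑ k ∈ (Fintype.piFinset fun i => Finset.Icc (r i) (B i)).filter
            (fun k => ∑ i, (k i - r i) ≤ m),
          (-1 : ℝ) ^ (∑ i, (k i - r i)) * (∏ i, ((k i).choose (r i) : ℝ)) *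
            (∏ i, ((c i).choose (k i) : ℝ)))
          = (∏ i, ((c i).choose (r i) : ℝ)) *
              ((-1) ^ m * (((∑ i, (c i - r i)) - 1).choose m : ℝ)) := by
        have step1 : (∑ k ∈ (Fintype.piFinset fun i => Finset.Icc (r i) (B i)).filter
              (fun k => ∑ i, (k i - r i) ≤ m),
            (-1 : ℝ) ^ (∑ i, (k i - r i)) * (∏ i, ((k i).choose (r i) : ℝ)) *
              (∏ i, ((c i).choose (k i) : ℝ)))
            = ∑ k ∈ (Fintype.piFinset fun i => Finset.Icc (r i) (B i)).filter
              (fun k => ∑ i, (k i - r i) ≤ m),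
            (∏ i, ((c i).choose (r i) : ℝ)) *
              ((-1 : ℝ) ^ (∑ i, (k i - r i)) *
                (∏ i, ((c i - r i).choose (k i - r i) : ℝ))) := by
          refine Finset.sum_congr rfl fun k hk => ?_
          simp only [Finset.mem_filter, Fintype.mem_piFinset, Finset.mem_Icc] at hk
          have hrk : ∀ i, r i ≤ k i := fun i => (hk.1 i).1
          have hAB : (∏ i, ((k i).choose (r i) : ℝ)) * (∏ i, ((c i).choose (k i) : ℝ))
              = (∏ i, ((c i).choose (r i) : ℝ)) *
                (∏ i, ((c i - r i).choose (k i - r i) : ℝ)) := by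
            rw [← Finset.prod_mul_distrib, ← Finset.prod_mul_distrib]
            refine Finset.prod_congr rfl fun i _ => ?_
            rw [mul_comm]
            exact_mod_cast congrArg (Nat.cast : ℕ → ℝ)
              (bonf_choose_mul (c i) (k i) (r i) (h1 i) (hrk i))
          rw [mul_assoc, hAB]; ring
        rw [step1, ← Finset.mul_sum]
        congr 1
        have reidx : (∑ k ∈ (Fintype.piFinset fun i => Finset.Icc (r i) (B i)).filter
              (fun k => ∑ i, (k i - r i) ≤ m),
            (-1 : ℝ) ^ (∑ i, (k i - r i)) *
              (∏ i, ((c i - r i).choose (k i - r i) : ℝ)))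
            = ∑ d ∈ (Fintype.piFinset fun i => Finset.range (B i - r i + 1)).filter
              (fun d => ∑ i, d i ≤ m),
            (-1 : ℝ) ^ (∑ i, d i) * (∏ i, ((c i - r i).choose (d i) : ℝ)) := by
          refine Finset.sum_nbij' (fun k => fun i => k i - r i) (fun d => fun i => r i + d i)
            ?_ ?_ ?_ ?_ ?_
          · intro k hk
            simp only [Finset.mem_filter, Fintype.mem_piFinset, Finset.mem_Icc,
              Finset.mem_range] at *
            exact ⟨fun i => by have := hk.1 i; omega, hk.2⟩
          · intro d hd
            simp only [Finset.mem_filter, Fintype.mem_piFinset, Finset.mem_Icc,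
              Finset.mem_range] at *
            constructor
            · intro i; have := hd.1 i; have := hrB i; omega
            · calc (∑ i, (r i + d i - r i)) = ∑ i, d i :=
                Finset.sum_congr rfl fun i _ => by omega
              _ ≤ m := hd.2
          · intro k hk
            simp only [Finset.mem_filter, Fintype.mem_piFinset, Finset.mem_Icc] at hk
            funext i
            have h3 := (hk.1 i).1
            show r i + (k i - r i) = k i
            omega
          · intro d _; funext i; show r i + d i - r i = d i; omega
          · intro k _; rfl
        rw [reidx]
        have shrink : (∑ d ∈ (Fintype.piFinset fun i => Finset.range (c i - r i + 1)).filter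
              (fun d => ∑ i, d i ≤ m),
            (-1 : ℝ) ^ (∑ i, d i) * (∏ i, ((c i - r i).choose (d i) : ℝ)))
            = ∑ d ∈ (Fintype.piFinset fun i => Finset.range (B i - r i + 1)).filter
              (fun d => ∑ i, d i ≤ m),
            (-1 : ℝ) ^ (∑ i, d i) * (∏ i, ((c i - r i).choose (d i) : ℝ)) := by
          refine Finset.sum_subset ?_ ?_
          · intro d hd
            simp only [Finset.mem_filter, Fintype.mem_piFinset, Finset.mem_range] at *
            exact ⟨fun i => by have := hd.1 i; have := hc i; omega, hd.2⟩
          · intro d hd hd2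
            simp only [Finset.mem_filter, Fintype.mem_piFinset, Finset.mem_range] at hd hd2
            obtain ⟨i, hi⟩ : ∃ i, c i - r i < d i := by
              by_contra h; push_neg at h
              exact hd2 ⟨fun i => by have := h i; omega, hd.2⟩
            have hz : ((c i - r i).choose (d i) : ℝ) = 0 := by
              rw [Nat.choose_eq_zero_of_lt hi]; norm_num
            rw [Finset.prod_eq_zero (Finset.mem_univ i) hz, mul_zero]
        rw [← shrink]
        have fib : (∑ d ∈ (Fintype.piFinset fun i => Finset.range (c i - r i + 1)).filter
              (fun d => ∑ i, d i ≤ m),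
            (-1 : ℝ) ^ (∑ i, d i) * (∏ i, ((c i - r i).choose (d i) : ℝ)))
            = ∑ s ∈ Finset.range (m + 1),
              (-1 : ℝ) ^ s * ((∑ i, (c i - r i)).choose s : ℝ) := by
          rw [← Finset.sum_fiberwise_of_maps_to (g := fun d : Fin q → ℕ => ∑ i, d i)
            (t := Finset.range (m + 1))
            (fun d hd => Finset.mem_range.2 (Nat.lt_succ_of_le (Finset.mem_filter.1 hd).2))]
          refine Finset.sum_congr rfl fun s hs => ?_
          have hsm : s ≤ m := by simp only [Finset.mem_range] at hs; omega
          have hfe : ((Fintype.piFinset fun i => Finset.range (c i - r i + 1)).filter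
                (fun d => ∑ i, d i ≤ m)).filter (fun d => ∑ i, d i = s)
              = (Fintype.piFinset fun i => Finset.range (c i - r i + 1)).filter
                (fun d => ∑ i, d i = s) := by
            rw [Finset.filter_filter]
            refine Finset.filter_congr fun d _ => ?_
            constructor
            · exact fun h => h.2
            · exact fun h => ⟨by omega, h⟩
          rw [hfe]
          have : (∑ d ∈ (Fintype.piFinset fun i => Finset.range (c i - r i + 1)).filter
                (fun d => ∑ i, d i = s),
              (-1 : ℝ) ^ (∑ i, d i) * (∏ i, ((c i - r i).choose (d i) : ℝ)))
              = ∑ d ∈ (Fintype.piFinset fun i => Finset.range (c i - r i + 1)).filter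
                (fun d => ∑ i, d i = s),
              (-1 : ℝ) ^ s * (∏ i, ((c i - r i).choose (d i) : ℝ)) := by
            refine Finset.sum_congr rfl fun d hd => ?_
            simp only [Finset.mem_filter] at hd
            rw [hd.2]
          rw [this, ← Finset.mul_sum]
          congr 1
          rw [← bonf_vand q (fun i => c i - r i) s]
          push_cast
          rfl
        rw [fib, bonf_alt_sum _ _ hN]
      constructor
      · intro hm
        rw [key, if_neg h2, Odd.neg_one_pow hm]
        have h01 : (0 : ℝ) ≤ (∏ i, ((c i).choose (r i) : ℝ)) *
            (((∑ i, (c i - r i)) - 1).choose m : ℝ) :=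
          mul_nonneg (Finset.prod_nonneg fun i _ => by positivity) (by positivity)
        nlinarith
      · intro hm
        rw [key, if_neg h2, Even.neg_one_pow hm]
        have h01 : (0 : ℝ) ≤ (∏ i, ((c i).choose (r i) : ℝ)) *
            (((∑ i, (c i - r i)) - 1).choose m : ℝ) :=
          mul_nonneg (Finset.prod_nonneg fun i _ => by positivity) (by positivity)
        nlinarith
  · -- some c i < r i : every term vanishes
    push_neg at h1
    obtain ⟨i0, hi0⟩ := h1
    have h2 : c ≠ r := fun h => by rw [h] at hi0; omega
    have hT : (∑ k ∈ (Fintype.piFinset fun i => Finset.Icc (r i) (B i)).filter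
          (fun k => ∑ i, (k i - r i) ≤ m),
        (-1 : ℝ) ^ (∑ i, (k i - r i)) * (∏ i, ((k i).choose (r i) : ℝ)) *
          (∏ i, ((c i).choose (k i) : ℝ))) = 0 := by
      refine Finset.sum_eq_zero fun k hk => ?_
      simp only [Finset.mem_filter, Fintype.mem_piFinset, Finset.mem_Icc] at hk
      have : ((c i0).choose (k i0) : ℝ) = 0 := by
        rw [Nat.choose_eq_zero_of_lt (by have := (hk.1 i0).1; omega)]; norm_num
      have hp : (∏ i, ((c i).choose (k i) : ℝ)) = 0 :=
        Finset.prod_eq_zero (Finset.mem_univ i0) this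
      rw [hp, mul_zero]
    rw [hT, if_neg h2]
    exact ⟨fun _ => le_refl 0, fun _ => le_refl 0⟩

lemma bonf_decomp {Ω : Type} [MeasurableSpace Ω] (P : Measure Ω) [IsProbabilityMeasure P]
    (q : ℕ) (I : Fin q → Type) [∀ i, Fintype (I i)]
    (A : (i : Fin q) → I i → Set Ω) (hA : ∀ i j, MeasurableSet (A i j))
    (p : (∀ i, Finset (I i)) → Prop) [DecidablePred p] [∀ i, DecidableEq (I i)] :
    (P {ω | p (fun i => Finset.univ.filter fun j => ω ∈ A i j)}).toReal
      = ∑ σ ∈ Finset.univ.filter p,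
        (P {ω | (fun i => Finset.univ.filter fun j => ω ∈ A i j) = σ}).toReal := by
  classical
  have hatom : ∀ σ : ∀ i, Finset (I i),
      MeasurableSet {ω | (fun i => Finset.univ.filter fun j => ω ∈ A i j) = σ} := by
    intro σ
    have hs : {ω | (fun i => Finset.univ.filter fun j => ω ∈ A i j) = σ}
        = ⋂ i, ⋂ j, (if j ∈ σ i then A i j else (A i j)ᶜ) := by
      ext ω
      simp only [Set.mem_setOf_eq, funext_iff, Finset.ext_iff, Finset.mem_filter,
        Finset.mem_univ, true_and, Set.mem_iInter]
      refine forall_congr' fun i => forall_congr' fun j => ?_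
      by_cases h : j ∈ σ i <;> simp [h]
    rw [hs]
    refine MeasurableSet.iInter fun i => MeasurableSet.iInter fun j => ?_
    by_cases h : j ∈ σ i
    · simpa [h] using hA i j
    · simpa [h] using (hA i j).compl
  have hset : {ω | p (fun i => Finset.univ.filter fun j => ω ∈ A i j)}
      = ⋃ σ ∈ Finset.univ.filter p,
          {ω | (fun i => Finset.univ.filter fun j => ω ∈ A i j) = σ} := by
    ext ω
    simp only [Set.mem_setOf_eq, Set.mem_iUnion, Finset.mem_filter, Finset.mem_univ, true_and]
    constructor
    · intro h
      exact ⟨fun i => Finset.univ.filter fun j => ω ∈ A i j, h, rfl⟩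
    · rintro ⟨σ, hσ, h⟩
      rw [h]; exact hσ
  have hdisj : Set.PairwiseDisjoint (↑(Finset.univ.filter p))
      (fun σ : ∀ i, Finset (I i) =>
        {ω | (fun i => Finset.univ.filter fun j => ω ∈ A i j) = σ}) := by
    intro σ _ τ _ hne
    refine Set.disjoint_left.2 fun ω h1 h2 => ?_
    exact hne (h1 ▸ h2 ▸ rfl)
  rw [hset, measure_biUnion_finset hdisj (fun σ _ => hatom σ),
    ENNReal.toReal_sum (fun σ _ => measure_ne_top P _)]

theorem stmt_3 {Ω : Type} [MeasurableSpace Ω] (P : Measure Ω) [IsProbabilityMeasure P]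
    (q : ℕ) (hq : 1 ≤ q) (I : Fin q → Type) [∀ i, Fintype (I i)]
    (A : (i : Fin q) → I i → Set Ω) (hA : ∀ i j, MeasurableSet (A i j))
    (r : Fin q → ℕ) (m : ℕ) :
    (Odd m →
      (∑ k ∈ (Fintype.piFinset fun i => Finset.Icc (r i) (Fintype.card (I i))).filter
          (fun k => ∑ i, (k i - r i) ≤ m),
        (-1 : ℝ) ^ (∑ i, (k i - r i)) * (∏ i, ((k i).choose (r i) : ℝ)) *
          ∑ J ∈ Fintype.piFinset (fun i => (Finset.univ : Finset (I i)).powersetCard (k i)),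
            (P (⋂ i, ⋂ j ∈ J i, A i j)).toReal)
        ≤ (P {ω | ∀ i, (Finset.univ.filter fun j => ω ∈ A i j).card = r i}).toReal)
    ∧ (Even m →
      (P {ω | ∀ i, (Finset.univ.filter fun j => ω ∈ A i j).card = r i}).toReal ≤
      ∑ k ∈ (Fintype.piFinset fun i => Finset.Icc (r i) (Fintype.card (I i))).filter
          (fun k => ∑ i, (k i - r i) ≤ m),
        (-1 : ℝ) ^ (∑ i, (k i - r i)) * (∏ i, ((k i).choose (r i) : ℝ)) *
          ∑ J ∈ Fintype.piFinset (fun i => (Finset.univ : Finset (I i)).powersetCard (k i)),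
            (P (⋂ i, ⋂ j ∈ J i, A i j)).toReal) := by
  classical
  set w : (∀ i, Finset (I i)) → ℝ :=
    fun σ => (P {ω | (fun i => Finset.univ.filter fun j => ω ∈ A i j) = σ}).toReal with hw
  have hw0 : ∀ σ, 0 ≤ w σ := fun σ => ENNReal.toReal_nonneg
  -- the target probability as a sum over atoms
  have htgt : (P {ω | ∀ i, (Finset.univ.filter fun j => ω ∈ A i j).card = r i}).toReal
      = ∑ σ : ∀ i, Finset (I i),
          (if (fun i => (σ i).card) = r then (1 : ℝ) else 0) * w σ := by
    have h := bonf_decomp P q I A hA (fun σ => ∀ i, (σ i).card = r i)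
    simp only [] at h
    rw [h, Finset.sum_filter]
    refine Finset.sum_congr rfl fun σ _ => ?_
    by_cases hc : ∀ i, (σ i).card = r i
    · rw [if_pos hc, if_pos (funext hc), one_mul]
    · rw [if_neg hc, if_neg (fun h => hc fun i => congrFun h i), zero_mul]
  -- each intersection probability as a sum over atoms
  have hJ : ∀ J : ∀ i, Finset (I i), (P (⋂ i, ⋂ j ∈ J i, A i j)).toReal
      = ∑ σ ∈ Finset.univ.filter (fun σ : ∀ i, Finset (I i) => ∀ i, J i ⊆ σ i), w σ := by
    intro J
    have hseteq : (⋂ i, ⋂ j ∈ J i, A i j)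
        = {ω | ∀ i, J i ⊆ (Finset.univ.filter fun j => ω ∈ A i j)} := by
      ext ω
      simp [Set.mem_iInter, Finset.subset_iff]
    rw [hseteq]
    have h := bonf_decomp P q I A hA (fun σ => ∀ i, J i ⊆ σ i)
    simp only [] at h
    exact h
  -- inner sums
  have hmain : ∀ k : Fin q → ℕ,
      (∑ J ∈ Fintype.piFinset (fun i => (Finset.univ : Finset (I i)).powersetCard (k i)),
          (P (⋂ i, ⋂ j ∈ J i, A i j)).toReal)
      = ∑ σ : ∀ i, Finset (I i), (∏ i, (((σ i).card).choose (k i) : ℝ)) * w σ := by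
    intro k
    calc (∑ J ∈ Fintype.piFinset (fun i => (Finset.univ : Finset (I i)).powersetCard (k i)),
          (P (⋂ i, ⋂ j ∈ J i, A i j)).toReal)
        = ∑ J ∈ Fintype.piFinset (fun i => (Finset.univ : Finset (I i)).powersetCard (k i)),
            ∑ σ : ∀ i, Finset (I i), if (∀ i, J i ⊆ σ i) then w σ else 0 := by
          refine Finset.sum_congr rfl fun J _ => ?_
          rw [hJ J, Finset.sum_filter]
      _ = ∑ σ : ∀ i, Finset (I i),
            ∑ J ∈ Fintype.piFinset (fun i => (Finset.univ : Finset (I i)).powersetCard (k i)),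
              if (∀ i, J i ⊆ σ i) then w σ else 0 := Finset.sum_comm
      _ = ∑ σ : ∀ i, Finset (I i), (∏ i, (((σ i).card).choose (k i) : ℝ)) * w σ := by
          refine Finset.sum_congr rfl fun σ _ => ?_
          rw [← Finset.sum_filter, Finset.sum_const, nsmul_eq_mul]
          congr 1
          have hfe : (Fintype.piFinset (fun i => (Finset.univ : Finset (I i)).powersetCard
                (k i))).filter (fun J => ∀ i, J i ⊆ σ i)
              = Fintype.piFinset (fun i => (σ i).powersetCard (k i)) := by
            ext J
            simp only [Finset.mem_filter, Fintype.mem_piFinset,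
              Finset.mem_powersetCard_univ, Finset.mem_powersetCard]
            aesop
          rw [hfe, Fintype.card_piFinset]
          push_cast
          refine Finset.prod_congr rfl fun i _ => ?_
          rw [Finset.card_powersetCard]
  -- the big sum as a sum over atoms
  have hLHS : (∑ k ∈ (Fintype.piFinset fun i => Finset.Icc (r i) (Fintype.card (I i))).filter
          (fun k => ∑ i, (k i - r i) ≤ m),
        (-1 : ℝ) ^ (∑ i, (k i - r i)) * (∏ i, ((k i).choose (r i) : ℝ)) *
          ∑ J ∈ Fintype.piFinset (fun i => (Finset.univ : Finset (I i)).powersetCard (k i)),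
            (P (⋂ i, ⋂ j ∈ J i, A i j)).toReal)
      = ∑ σ : ∀ i, Finset (I i),
          (∑ k ∈ (Fintype.piFinset fun i => Finset.Icc (r i) (Fintype.card (I i))).filter
            (fun k => ∑ i, (k i - r i) ≤ m),
            (-1 : ℝ) ^ (∑ i, (k i - r i)) * (∏ i, ((k i).choose (r i) : ℝ)) *
              (∏ i, (((σ i).card).choose (k i) : ℝ))) * w σ := by
    calc _ = ∑ k ∈ (Fintype.piFinset fun i => Finset.Icc (r i) (Fintype.card (I i))).filter
            (fun k => ∑ i, (k i - r i) ≤ m),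
          ∑ σ : ∀ i, Finset (I i),
            (-1 : ℝ) ^ (∑ i, (k i - r i)) * (∏ i, ((k i).choose (r i) : ℝ)) *
              (∏ i, (((σ i).card).choose (k i) : ℝ)) * w σ := by
          refine Finset.sum_congr rfl fun k _ => ?_
          rw [hmain k, Finset.mul_sum]
          refine Finset.sum_congr rfl fun σ _ => ?_
          ring
      _ = ∑ σ : ∀ i, Finset (I i),
          ∑ k ∈ (Fintype.piFinset fun i => Finset.Icc (r i) (Fintype.card (I i))).filter
            (fun k => ∑ i, (k i - r i) ≤ m),
            (-1 : ℝ) ^ (∑ i, (k i - r i)) * (∏ i, ((k i).choose (r i) : ℝ)) *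
              (∏ i, (((σ i).card).choose (k i) : ℝ)) * w σ := Finset.sum_comm
      _ = _ := by
          refine Finset.sum_congr rfl fun σ _ => ?_
          rw [Finset.sum_mul]
  have hcore : ∀ σ : ∀ i, Finset (I i),
      (Odd m → (∑ k ∈ (Fintype.piFinset fun i => Finset.Icc (r i) (Fintype.card (I i))).filter
            (fun k => ∑ i, (k i - r i) ≤ m),
          (-1 : ℝ) ^ (∑ i, (k i - r i)) * (∏ i, ((k i).choose (r i) : ℝ)) *
            (∏ i, (((σ i).card).choose (k i) : ℝ)))
          ≤ (if (fun i => (σ i).card) = r then (1 : ℝ) else 0))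
      ∧ (Even m → (if (fun i => (σ i).card) = r then (1 : ℝ) else 0) ≤
          ∑ k ∈ (Fintype.piFinset fun i => Finset.Icc (r i) (Fintype.card (I i))).filter
            (fun k => ∑ i, (k i - r i) ≤ m),
          (-1 : ℝ) ^ (∑ i, (k i - r i)) * (∏ i, ((k i).choose (r i) : ℝ)) *
            (∏ i, (((σ i).card).choose (k i) : ℝ))) := fun σ =>
    bonf_core q (fun i => Fintype.card (I i)) r (fun i => (σ i).card)
      (fun i => Finset.card_le_univ (σ i)) m
  constructor
  · intro hm
    rw [htgt, hLHS]
    exact Finset.sum_le_sum fun σ _ =>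
      mul_le_mul_of_nonneg_right ((hcore σ).1 hm) (hw0 σ)
  · intro hm
    rw [htgt, hLHS]
    exact Finset.sum_le_sum fun σ _ =>
      mul_le_mul_of_nonneg_right ((hcore σ).2 hm) (hw0 σ)
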